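/- Fix an integer s ≥ 2. For each n ≥ s, let S_n ⊆ {1,…,n} with |S_n| = s, let the Shapley interaction weights be p_t^s(n) := 1/((n−s+1) · C(n−s, t)), and let leverage sampling be P_n(T) := 1/((n+1) · C(n, |T|)). Then Γ_{S_n}(P_n) = Θ(n^{s−1}) as n → ∞; i.e., there exist constants c, C > 0 depending only on s such that c · n^{s−1} ≤ Γ_{S_n}(P_n) ≤ C · n^{s−1} for all sufficiently large n. In particular, the lower bound Γ_{S_n}(P_n) ≥ ((n+1) · (n−s+1)_s / (n−s+1)²) · ∑_{j=1}^{n−s+1} 1/(j)_s holds for all n ≥ s, where (a)_k denotes the rising factorial. -/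

import Mathlib

open Finset

/-- Rising factorial `(a)_k = a (a+1) ⋯ (a+k−1)`, with `(a)_0 = 1`. -/
def rf (a k : ℕ) : ℕ := ∏ i ∈ Finset.range k, (a + i)

/-- Shapley interaction weight `p_t^s(n) = 1/((n−s+1) C(n−s, t))`. -/
noncomputable def shapW (n s t : ℕ) : ℝ :=
  1 / (((n - s + 1 : ℕ) : ℝ) * (Nat.choose (n - s) t : ℝ))

/-- Leverage-sampling probability `P(T) = 1/((n+1) C(n, |T|))`. -/
noncomputable def lev (n : ℕ) (T : Finset (Fin n)) : ℝ :=
  1 / (((n + 1 : ℕ) : ℝ) * (Nat.choose n T.card : ℝ))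

/-- Variance factor of the MSR estimator for the Shapley interaction index
under leverage sampling. -/
noncomputable def GammaShap (n s : ℕ) (S : Finset (Fin n)) : ℝ :=
  ∑ T : Finset (Fin n), (shapW n s (T.card - (S ∩ T).card)) ^ 2 / lev n T

/- ### Auxiliary lemmas on the rising factorial -/

lemma rf_pos {a : ℕ} (ha : 1 ≤ a) (k : ℕ) : 0 < rf a k :=
  Finset.prod_pos fun _ _ => by omega

lemma rf_mul_factorial (a k : ℕ) :
    rf (a + 1) k * a.factorial = (a + k).factorial := by
  induction k with
  | zero => simp [rf]
  | succ k ih =>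
    have h1 : rf (a + 1) (k + 1) = rf (a + 1) k * (a + 1 + k) := by
      unfold rf; rw [Finset.prod_range_succ]
    have h2 : (a + (k + 1)).factorial = (a + 1 + k) * (a + k).factorial := by
      have h3 : a + (k + 1) = (a + k) + 1 := by ring
      rw [h3, Nat.factorial_succ]
      ring_nf
    rw [h1, h2, ← ih]; ring

lemma rf_one_left (s : ℕ) : rf 1 s = s.factorial := by
  have := rf_mul_factorial 0 s
  simpa using this

lemma rf_zero_right (a : ℕ) : rf a 0 = 1 := by simp [rf]

lemma rf_ge_base {a : ℕ} (k : ℕ) (hk : 1 ≤ k) : a ≤ rf a k := by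
  obtain ⟨d, rfl⟩ : ∃ d, k = 1 + d := ⟨k - 1, by omega⟩
  unfold rf
  rw [Finset.prod_range_add]
  simp only [Finset.prod_range_one, add_zero]
  exact Nat.le_mul_of_pos_right a (Finset.prod_pos fun _ _ => by omega)

lemma rf_ge_two {a : ℕ} (ha : 1 ≤ a) {k : ℕ} (hk : 2 ≤ k) :
    a * (a + 1) ≤ rf a k := by
  obtain ⟨d, rfl⟩ : ∃ d, k = 2 + d := ⟨k - 2, by omega⟩
  unfold rf
  rw [Finset.prod_range_add]
  have h2 : (∏ i ∈ Finset.range 2, (a + i)) = a * (a + 1) := by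
    simp [Finset.prod_range_succ]
  rw [h2]
  exact Nat.le_mul_of_pos_right _ (Finset.prod_pos fun _ _ => by omega)

lemma rf_le_pow (a b k : ℕ) (h : a + k ≤ b + 1) : rf a k ≤ b ^ k := by
  unfold rf
  calc ∏ i ∈ Finset.range k, (a + i) ≤ ∏ _i ∈ Finset.range k, b :=
        Finset.prod_le_prod' fun i hi => by
          have := Finset.mem_range.mp hi; omega
    _ = b ^ k := by rw [Finset.prod_const, Finset.card_range]

lemma pow_le_rf (a k : ℕ) : a ^ k ≤ rf a k := by
  unfold rf
  calc a ^ k = ∏ _i ∈ Finset.range k, a := by rw [Finset.prod_const, Finset.card_range]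
    _ ≤ ∏ i ∈ Finset.range k, (a + i) := Finset.prod_le_prod' fun i _ => by omega

/-- The key combinatorial identity:
`C(M+s, k+m) · (m+1)_k · (M−m+1)_{s−k} = (M+1)_s · C(M, m)`. -/
lemma choose_rf_identity {s k M m : ℕ} (hk : k ≤ s) (hm : m ≤ M) :
    (M + s).choose (k + m) * (rf (m + 1) k * rf (M - m + 1) (s - k))
      = rf (M + 1) s * M.choose m := by
  apply Nat.eq_of_mul_eq_mul_right
    (show 0 < m.factorial * (M - m).factorial by positivity)
  have e1 : rf (m + 1) k * m.factorial = (m + k).factorial := rf_mul_factorial m k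
  have e2 : rf (M - m + 1) (s - k) * (M - m).factorial = (M - m + (s - k)).factorial :=
    rf_mul_factorial _ _
  have e3 : rf (M + 1) s * M.factorial = (M + s).factorial := rf_mul_factorial M s
  have e4 : M.choose m * m.factorial * (M - m).factorial = M.factorial :=
    Nat.choose_mul_factorial_mul_factorial hm
  have hkm : k + m ≤ M + s := by omega
  have e5 : (M + s).choose (k + m) * (k + m).factorial * (M + s - (k + m)).factorial
      = (M + s).factorial := Nat.choose_mul_factorial_mul_factorial hkm
  have h6 : M - m + (s - k) = M + s - (k + m) := by omega
  have h7 : m + k = k + m := by ring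
  calc (M + s).choose (k + m) * (rf (m + 1) k * rf (M - m + 1) (s - k))
        * (m.factorial * (M - m).factorial)
      = (M + s).choose (k + m) * (rf (m + 1) k * m.factorial)
        * (rf (M - m + 1) (s - k) * (M - m).factorial) := by ring
    _ = (M + s).choose (k + m) * (k + m).factorial * (M + s - (k + m)).factorial := by
        rw [e1, e2, h6, h7]
    _ = (M + s).factorial := e5
    _ = rf (M + 1) s * M.factorial := e3.symm
    _ = rf (M + 1) s * (M.choose m * m.factorial * (M - m).factorial) := by rw [e4]
    _ = rf (M + 1) s * M.choose m * (m.factorial * (M - m).factorial) := by ring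

/- ### The closed form of the variance factor -/

lemma sum_powerset_card {α : Type*} (s : Finset α) (g : ℕ → ℝ) :
    ∑ A ∈ s.powerset, g A.card
      = ∑ k ∈ Finset.range (s.card + 1), (s.card.choose k : ℝ) * g k := by
  rw [Finset.sum_powerset]
  exact Finset.sum_congr rfl fun k _ => by
    rw [Finset.sum_powersetCard, nsmul_eq_mul]

lemma gamma_eq (n s : ℕ) (hsn : s ≤ n) (S : Finset (Fin n)) (hS : S.card = s) :
    GammaShap n s S
      = (((n + 1 : ℕ) : ℝ) * (rf (n - s + 1) s : ℝ) / ((n - s + 1 : ℕ) : ℝ) ^ 2) *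
          ∑ k ∈ Finset.range (s + 1), (s.choose k : ℝ) *
            ∑ m ∈ Finset.range (n - s + 1),
              1 / ((rf (m + 1) k : ℝ) * (rf (n - s - m + 1) (s - k) : ℝ)) := by
  classical
  set M := n - s with hMdef
  have hrec : ∀ A B : Finset (Fin n), A ⊆ S → B ⊆ Sᶜ →
      ((A ∪ B) ∩ S = A ∧ (A ∪ B) \ S = B) := by
    intro A B hA hB
    have h2 : ∀ x, x ∈ B → x ∉ S := fun x hx => Finset.mem_compl.mp (hB hx)
    constructor
    · ext x
      simp only [Finset.mem_inter, Finset.mem_union]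
      exact ⟨fun h => h.1.elim id fun hb => absurd h.2 (h2 x hb),
        fun h3 => ⟨Or.inl h3, hA h3⟩⟩
    · ext x
      simp only [Finset.mem_sdiff, Finset.mem_union]
      exact ⟨fun h => h.1.elim (fun ha => absurd (hA ha) h.2) id,
        fun h3 => ⟨Or.inr h3, h2 x h3⟩⟩
  have hunion : ∀ T : Finset (Fin n), T ∩ S ∪ T \ S = T := fun T => by
    have := sup_inf_sdiff T S
    simpa using this
  -- Step 1 : remove the division
  have h1 : GammaShap n s S
      = ∑ T : Finset (Fin n),
          (shapW n s (T.card - (S ∩ T).card)) ^ 2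
            * (((n + 1 : ℕ) : ℝ) * (n.choose T.card : ℝ)) := by
    unfold GammaShap lev
    refine Finset.sum_congr rfl fun T _ => ?_
    rw [one_div, div_eq_mul_inv, inv_inv]
  -- Step 2 : the bijection T ↔ (T ∩ S, T \ S)
  have h2 : ∀ f : Finset (Fin n) → ℝ,
      ∑ T : Finset (Fin n), f T = ∑ A ∈ S.powerset, ∑ B ∈ Sᶜ.powerset, f (A ∪ B) := by
    intro f
    rw [← Finset.sum_product']
    refine Finset.sum_nbij' (fun T => (T ∩ S, T \ S)) (fun p => p.1 ∪ p.2)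
      ?_ ?_ ?_ ?_ ?_
    · intro T _
      simp only [Finset.mem_product, Finset.mem_powerset]
      refine ⟨Finset.inter_subset_right, ?_⟩
      intro x hx
      simp only [Finset.mem_sdiff] at hx
      simp [Finset.mem_compl, hx.2]
    · intro p _
      exact Finset.mem_univ _
    · intro T _
      exact hunion T
    · intro p hp
      simp only [Finset.mem_product, Finset.mem_powerset] at hp
      have := hrec p.1 p.2 hp.1 hp.2
      simp only [this.1, this.2]
    · intro T _
      exact (congrArg f (hunion T)).symm
  rw [h1, h2 (fun T => (shapW n s (T.card - (S ∩ T).card)) ^ 2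
      * (((n + 1 : ℕ) : ℝ) * (n.choose T.card : ℝ)))]
  -- Step 3 : the summand only depends on the two cardinalities
  have h3 : ∀ A ∈ S.powerset, ∀ B ∈ Sᶜ.powerset,
      (shapW n s ((A ∪ B).card - (S ∩ (A ∪ B)).card)) ^ 2
          * (((n + 1 : ℕ) : ℝ) * (n.choose (A ∪ B).card : ℝ))
        = (shapW n s B.card) ^ 2
          * (((n + 1 : ℕ) : ℝ) * (n.choose (A.card + B.card) : ℝ)) := by
    intro A hA B hB
    rw [Finset.mem_powerset] at hA hB
    have hdisj : Disjoint A B := by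
      rw [Finset.disjoint_left]
      intro x hxA hxB
      exact (Finset.mem_compl.mp (hB hxB)) (hA hxA)
    have hcard : (A ∪ B).card = A.card + B.card := Finset.card_union_of_disjoint hdisj
    have hSint : S ∩ (A ∪ B) = A := by
      rw [Finset.inter_comm]
      exact (hrec A B hA hB).1
    rw [hcard, hSint]
    congr 3
    omega
  rw [Finset.sum_congr rfl fun A hA => Finset.sum_congr rfl fun B hB => h3 A hA B hB]
  -- Step 4 : count subsets with given cardinality
  have hSc : Sᶜ.card = M := by
    rw [Finset.card_compl, hS]
    simp [hMdef]
  rw [sum_powerset_card S (fun k => ∑ B ∈ Sᶜ.powerset,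
      (shapW n s B.card) ^ 2 * (((n + 1 : ℕ) : ℝ) * (n.choose (k + B.card) : ℝ)))]
  rw [Finset.sum_congr rfl fun k _ => by
    rw [sum_powerset_card Sᶜ (fun m =>
      (shapW n s m) ^ 2 * (((n + 1 : ℕ) : ℝ) * (n.choose (k + m) : ℝ)))]]
  rw [hS, hSc]
  -- Step 5 : closed form of each term
  have key : ∀ k, k ≤ s → ∀ m, m ≤ M →
      (M.choose m : ℝ) * ((shapW n s m) ^ 2 * (((n + 1 : ℕ) : ℝ) * (n.choose (k + m) : ℝ)))
        = (((n + 1 : ℕ) : ℝ) * (rf (M + 1) s : ℝ) / ((M + 1 : ℕ) : ℝ) ^ 2)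
            * (1 / ((rf (m + 1) k : ℝ) * (rf (M - m + 1) (s - k) : ℝ))) := by
    intro k hk m hm
    have hid := choose_rf_identity (s := s) (k := k) (M := M) (m := m) hk hm
    have hn' : M + s = n := by omega
    rw [hn'] at hid
    have hid' : (n.choose (k + m) : ℝ) * ((rf (m + 1) k : ℝ) * (rf (M - m + 1) (s - k) : ℝ))
        = (rf (M + 1) s : ℝ) * (M.choose m : ℝ) := by exact_mod_cast hid
    have hcp : (0 : ℝ) < (M.choose m : ℝ) := by exact_mod_cast Nat.choose_pos hm
    have hr1 : (0 : ℝ) < (rf (m + 1) k : ℝ) := by exact_mod_cast rf_pos (by omega) k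
    have hr2 : (0 : ℝ) < (rf (M - m + 1) (s - k) : ℝ) := by exact_mod_cast rf_pos (by omega) (s - k)
    have hM1 : (0 : ℝ) < ((M + 1 : ℕ) : ℝ) := by positivity
    have hsw : shapW n s m = 1 / (((M + 1 : ℕ) : ℝ) * (M.choose m : ℝ)) := by
      unfold shapW
      rw [← hMdef]
    rw [hsw]
    rw [div_pow, one_pow, mul_pow]
    field_simp
    linear_combination hid'
  rw [Finset.mul_sum]
  refine Finset.sum_congr rfl fun k hk => ?_
  have hk' : k ≤ s := by
    have := Finset.mem_range.mp hk; omega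
  rw [Finset.sum_congr rfl fun m hm => key k hk' m (by have := Finset.mem_range.mp hm; omega)]
  rw [← Finset.mul_sum]
  ring

/- ### Bounds for the inner sums -/

lemma tele_sum (N : ℕ) :
    ∑ j ∈ Finset.range N, (1 : ℝ) / (((j : ℝ) + 1) * ((j : ℝ) + 2)) = 1 - 1 / (N + 1) := by
  induction N with
  | zero => simp
  | succ N ih =>
    rw [Finset.sum_range_succ, ih]
    push_cast
    have h1 : ((N : ℝ) + 1) ≠ 0 := by positivity
    have h2 : ((N : ℝ) + 2) ≠ 0 := by positivity
    field_simp
    ring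

lemma harm_sum (N : ℕ) :
    ∑ m ∈ Finset.range N, (1 : ℝ) / ((m : ℝ) + 1) ≤ N := by
  calc ∑ m ∈ Finset.range N, (1 : ℝ) / ((m : ℝ) + 1)
      ≤ ∑ _m ∈ Finset.range N, (1 : ℝ) := by
        refine Finset.sum_le_sum fun i _ => ?_
        rw [div_le_one (by positivity)]
        linarith [Nat.cast_nonneg (α := ℝ) i]
    _ = N := by simp

lemma one_div_le_one_div_of_nat_le {a b : ℕ} (ha : 0 < a) (h : a ≤ b) :
    (1 : ℝ) / (b : ℝ) ≤ 1 / (a : ℝ) :=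
  one_div_le_one_div_of_le (by exact_mod_cast ha) (by exact_mod_cast h)

lemma Bk_le_two {s : ℕ} (hs : 2 ≤ s) (M k : ℕ) (hk : k ≤ s) :
    ∑ m ∈ Finset.range (M + 1),
        1 / ((rf (m + 1) k : ℝ) * (rf (M - m + 1) (s - k) : ℝ)) ≤ 2 := by
  have htele : ∀ N : ℕ, ∑ j ∈ Finset.range N,
      (1 : ℝ) / (((j : ℝ) + 1) * ((j : ℝ) + 2)) ≤ 2 := by
    intro N
    rw [tele_sum]
    have : (0 : ℝ) ≤ 1 / ((N : ℝ) + 1) := by positivity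
    linarith
  rcases eq_or_ne k 0 with rfl | hk0
  · -- k = 0
    have hb : ∀ m ∈ Finset.range (M + 1),
        1 / ((rf (m + 1) 0 : ℝ) * (rf (M - m + 1) (s - 0) : ℝ))
          ≤ 1 / ((((M - m : ℕ) : ℝ) + 1) * (((M - m : ℕ) : ℝ) + 2)) := by
      intro m hm
      rw [rf_zero_right, Nat.cast_one, one_mul]
      have h1 : (M - m + 1) * (M - m + 2) ≤ rf (M - m + 1) (s - 0) := by
        have h2 := rf_ge_two (a := M - m + 1) (by omega) (k := s - 0) (by omega)
        calc (M - m + 1) * (M - m + 2) = (M - m + 1) * ((M - m + 1) + 1) := by ring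
          _ ≤ rf (M - m + 1) (s - 0) := h2
      calc (1 : ℝ) / (rf (M - m + 1) (s - 0) : ℝ)
          ≤ 1 / (((M - m + 1) * (M - m + 2) : ℕ) : ℝ) :=
            one_div_le_one_div_of_nat_le (by positivity) h1
        _ = 1 / ((((M - m : ℕ) : ℝ) + 1) * (((M - m : ℕ) : ℝ) + 2)) := by
            push_cast; ring_nf
    refine (Finset.sum_le_sum hb).trans ?_
    have hre := Finset.sum_range_reflect
      (fun j : ℕ => (1 : ℝ) / (((j : ℝ) + 1) * ((j : ℝ) + 2))) (M + 1)
    simp only [Nat.add_sub_cancel] at hre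
    calc ∑ m ∈ Finset.range (M + 1),
          (1 : ℝ) / ((((M - m : ℕ) : ℝ) + 1) * (((M - m : ℕ) : ℝ) + 2))
        = ∑ j ∈ Finset.range (M + 1), (1 : ℝ) / (((j : ℝ) + 1) * ((j : ℝ) + 2)) := hre
      _ ≤ 2 := htele (M + 1)
  rcases eq_or_ne k s with rfl | hks
  · -- k = s
    have hb : ∀ m ∈ Finset.range (M + 1),
        1 / ((rf (m + 1) k : ℝ) * (rf (M - m + 1) (k - k) : ℝ))
          ≤ 1 / (((m : ℝ) + 1) * ((m : ℝ) + 2)) := by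
      intro m hm
      rw [Nat.sub_self, rf_zero_right, Nat.cast_one, mul_one]
      have h1 : (m + 1) * (m + 2) ≤ rf (m + 1) k := by
        have h2 := rf_ge_two (a := m + 1) (by omega) (k := k) hs
        calc (m + 1) * (m + 2) = (m + 1) * ((m + 1) + 1) := by ring
          _ ≤ rf (m + 1) k := h2
      calc (1 : ℝ) / (rf (m + 1) k : ℝ)
          ≤ 1 / (((m + 1) * (m + 2) : ℕ) : ℝ) :=
            one_div_le_one_div_of_nat_le (by positivity) h1
        _ = 1 / (((m : ℝ) + 1) * ((m : ℝ) + 2)) := by push_cast; ring_nf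
    exact (Finset.sum_le_sum hb).trans (htele (M + 1))
  · -- 1 ≤ k ≤ s - 1
    have hk1 : 1 ≤ k := by omega
    have hsk1 : 1 ≤ s - k := by omega
    have hb : ∀ m ∈ Finset.range (M + 1),
        1 / ((rf (m + 1) k : ℝ) * (rf (M - m + 1) (s - k) : ℝ))
          ≤ 1 / ((M : ℝ) + 2) * (1 / ((m : ℝ) + 1) + 1 / (((M - m : ℕ) : ℝ) + 1)) := by
      intro m hm
      have hmM : m ≤ M := by have := Finset.mem_range.mp hm; omega
      have h1 : (m + 1) * (M - m + 1) ≤ rf (m + 1) k * rf (M - m + 1) (s - k) :=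
        Nat.mul_le_mul (rf_ge_base k hk1) (rf_ge_base (s - k) hsk1)
      have hcast : ((M - m : ℕ) : ℝ) = (M : ℝ) - (m : ℝ) := by
        push_cast [Nat.cast_sub hmM]; ring
      have step1 : (1 : ℝ) / ((rf (m + 1) k : ℝ) * (rf (M - m + 1) (s - k) : ℝ))
          ≤ 1 / ((((m + 1) * (M - m + 1) : ℕ)) : ℝ) := by
        rw [← Nat.cast_mul]
        exact one_div_le_one_div_of_nat_le (by positivity) h1
      refine step1.trans ?_
      have hm1 : (0 : ℝ) < (m : ℝ) + 1 := by positivity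
      have hm2 : (0 : ℝ) < (M : ℝ) - (m : ℝ) + 1 := by
        have : (m : ℝ) ≤ (M : ℝ) := by exact_mod_cast hmM
        linarith
      have hM2 : (0 : ℝ) < (M : ℝ) + 2 := by positivity
      rw [hcast]
      rw [show (((m + 1) * (M - m + 1) : ℕ) : ℝ)
          = ((m : ℝ) + 1) * ((M : ℝ) - (m : ℝ) + 1) by push_cast [Nat.cast_sub hmM]; ring]
      rw [le_iff_eq_or_lt]
      left
      field_simp
      ring
    refine (Finset.sum_le_sum hb).trans ?_
    rw [← Finset.mul_sum]
    have hre := Finset.sum_range_reflect (fun j : ℕ => (1 : ℝ) / ((j : ℝ) + 1)) (M + 1)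
    simp only [Nat.add_sub_cancel] at hre
    have hsum : ∑ m ∈ Finset.range (M + 1),
        (1 / ((m : ℝ) + 1) + 1 / (((M - m : ℕ) : ℝ) + 1))
        = 2 * ∑ m ∈ Finset.range (M + 1), 1 / ((m : ℝ) + 1) := by
      rw [Finset.sum_add_distrib]
      rw [show (∑ m ∈ Finset.range (M + 1), (1 : ℝ) / (((M - m : ℕ) : ℝ) + 1))
          = ∑ j ∈ Finset.range (M + 1), (1 : ℝ) / ((j : ℝ) + 1) from hre]
      ring
    rw [hsum]
    have hharm := harm_sum (M + 1)
    have hM2 : (0 : ℝ) < (M : ℝ) + 2 := by positivity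
    rw [div_mul_eq_mul_div, div_le_iff₀ hM2]
    push_cast at hharm ⊢
    nlinarith [hharm]

/- ### Main theorem -/

/-- For fixed `s ≥ 2`, the variance factor under leverage sampling is `Θ(n^{s−1})`,
with the explicit lower bound
`Γ ≥ ((n+1)(n−s+1)_s/(n−s+1)²) ∑_{j=1}^{n−s+1} 1/(j)_s` for every `n ≥ s`. -/
theorem gamma_shapley_leverage_theta (s : ℕ) (hs : 2 ≤ s) :
    (∃ c C : ℝ, 0 < c ∧ 0 < C ∧ ∃ N₀ : ℕ, ∀ n : ℕ, N₀ ≤ n → s ≤ n →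
      ∀ S : Finset (Fin n), S.card = s →
        c * (n : ℝ) ^ (s - 1) ≤ GammaShap n s S
          ∧ GammaShap n s S ≤ C * (n : ℝ) ^ (s - 1)) ∧
    (∀ n : ℕ, s ≤ n → ∀ S : Finset (Fin n), S.card = s →
      (((n + 1 : ℕ) : ℝ) * (rf (n - s + 1) s : ℝ) / ((n - s + 1 : ℕ) : ℝ) ^ 2)
          * ∑ j ∈ Finset.Icc 1 (n - s + 1), 1 / (rf j s : ℝ)
        ≤ GammaShap n s S) := by
  obtain ⟨u, rfl⟩ : ∃ u, s = u + 2 := ⟨s - 2, by omega⟩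
  have part2 : ∀ n : ℕ, u + 2 ≤ n → ∀ S : Finset (Fin n), S.card = u + 2 →
      (((n + 1 : ℕ) : ℝ) * (rf (n - (u + 2) + 1) (u + 2) : ℝ)
          / ((n - (u + 2) + 1 : ℕ) : ℝ) ^ 2)
          * ∑ j ∈ Finset.Icc 1 (n - (u + 2) + 1), 1 / (rf j (u + 2) : ℝ)
        ≤ GammaShap n (u + 2) S := by
    intro n hsn S hS
    rw [gamma_eq n (u + 2) hsn S hS]
    set M := n - (u + 2) with hMdef
    have hCnonneg : (0 : ℝ) ≤ ((n + 1 : ℕ) : ℝ) * (rf (M + 1) (u + 2) : ℝ)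
        / ((M + 1 : ℕ) : ℝ) ^ 2 := by positivity
    refine mul_le_mul_of_nonneg_left ?_ hCnonneg
    have hIcc : ∑ j ∈ Finset.Icc 1 (M + 1), 1 / (rf j (u + 2) : ℝ)
        = ((u + 2).choose (u + 2) : ℝ) * ∑ m ∈ Finset.range (M + 1),
            1 / ((rf (m + 1) (u + 2) : ℝ) * (rf (M - m + 1) ((u + 2) - (u + 2)) : ℝ)) := by
      rw [Nat.choose_self, Nat.sub_self]
      simp only [rf_zero_right, Nat.cast_one, mul_one, one_mul]
      rw [← Finset.Ico_add_one_right_eq_Icc, Finset.sum_Ico_eq_sum_range]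
      simp only [Nat.succ_sub_one, Nat.add_sub_cancel]
      exact Finset.sum_congr rfl fun m _ => by rw [Nat.add_comm 1 m]
    rw [hIcc]
    exact Finset.single_le_sum
      (f := fun k => ((u + 2).choose k : ℝ) * ∑ m ∈ Finset.range (M + 1),
        1 / ((rf (m + 1) k : ℝ) * (rf (M - m + 1) ((u + 2) - k) : ℝ)))
      (fun k _ => by positivity) (Finset.mem_range.mpr (by omega))
  refine ⟨?_, part2⟩
  refine ⟨((2 : ℝ) ^ u * ((u + 2).factorial : ℝ))⁻¹, 2 ^ (2 * u + 6), by positivity,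
    by positivity, 2 * u + 4, ?_⟩
  intro n hn hsn S hS
  have hge := gamma_eq n (u + 2) hsn S hS
  set M := n - (u + 2) with hMdef
  have hM2 : n + 1 ≤ 2 * (M + 1) := by omega
  have hn1 : 1 ≤ n := by omega
  have hsub : u + 2 - 1 = u + 1 := rfl
  set Cf := ((n + 1 : ℕ) : ℝ) * (rf (M + 1) (u + 2) : ℝ) / ((M + 1 : ℕ) : ℝ) ^ 2 with hCf
  set Sig0 := ∑ k ∈ Finset.range (u + 2 + 1), ((u + 2).choose k : ℝ) *
      ∑ m ∈ Finset.range (M + 1),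
        1 / ((rf (m + 1) k : ℝ) * (rf (M - m + 1) ((u + 2) - k) : ℝ)) with hSig0
  have hCf0 : 0 ≤ Cf := by rw [hCf]; positivity
  have hSpos : 0 ≤ Sig0 := by rw [hSig0]; positivity
  have hSub0 : Sig0 ≤ 2 ^ (u + 3) := by
    rw [hSig0]
    calc ∑ k ∈ Finset.range (u + 2 + 1), ((u + 2).choose k : ℝ) *
          ∑ m ∈ Finset.range (M + 1),
            1 / ((rf (m + 1) k : ℝ) * (rf (M - m + 1) ((u + 2) - k) : ℝ))
        ≤ ∑ k ∈ Finset.range (u + 2 + 1), ((u + 2).choose k : ℝ) * 2 := by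
          refine Finset.sum_le_sum fun k hk => ?_
          exact mul_le_mul_of_nonneg_left
            (Bk_le_two (by omega) M k (by have := Finset.mem_range.mp hk; omega))
            (Nat.cast_nonneg _)
      _ = (∑ k ∈ Finset.range (u + 2 + 1), ((u + 2).choose k : ℝ)) * 2 := by
          rw [Finset.sum_mul]
      _ = (2 : ℝ) ^ (u + 2) * 2 := by
          rw [← Nat.cast_sum, Nat.sum_range_choose]
          push_cast; ring
      _ = 2 ^ (u + 3) := by ring
  have hSlb : (((u + 2).factorial : ℝ))⁻¹ ≤ Sig0 := by
    rw [hSig0]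
    have h1 : (((u + 2).factorial : ℝ))⁻¹ ≤ ((u + 2).choose (u + 2) : ℝ) *
        ∑ m ∈ Finset.range (M + 1),
          1 / ((rf (m + 1) (u + 2) : ℝ) * (rf (M - m + 1) ((u + 2) - (u + 2)) : ℝ)) := by
      rw [Nat.choose_self, Nat.sub_self]
      simp only [rf_zero_right, Nat.cast_one, mul_one, one_mul]
      have h2 : (1 : ℝ) / (rf (0 + 1) (u + 2) : ℝ)
          ≤ ∑ m ∈ Finset.range (M + 1), 1 / (rf (m + 1) (u + 2) : ℝ) :=
        Finset.single_le_sum (f := fun m => 1 / (rf (m + 1) (u + 2) : ℝ))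
          (fun m _ => by positivity) (Finset.mem_range.mpr (by omega))
      have h3 : rf (0 + 1) (u + 2) = (u + 2).factorial := by
        rw [Nat.zero_add, rf_one_left]
      rw [h3] at h2
      simpa [one_div] using h2
    exact h1.trans (Finset.single_le_sum
      (f := fun k => ((u + 2).choose k : ℝ) * ∑ m ∈ Finset.range (M + 1),
        1 / ((rf (m + 1) k : ℝ) * (rf (M - m + 1) ((u + 2) - k) : ℝ)))
      (fun k _ => by positivity) (Finset.mem_range.mpr (by omega)))
  have hrfub : (rf (M + 1) (u + 2) : ℝ) ≤ ((n : ℝ) + 1) ^ (u + 2) := by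
    have h := rf_le_pow (M + 1) (n + 1) (u + 2) (by omega)
    calc (rf (M + 1) (u + 2) : ℝ) ≤ (((n + 1) ^ (u + 2) : ℕ) : ℝ) := by exact_mod_cast h
      _ = ((n : ℝ) + 1) ^ (u + 2) := by push_cast; ring
  have hrflb : ((M : ℝ) + 1) ^ (u + 2) ≤ (rf (M + 1) (u + 2) : ℝ) := by
    have h := pow_le_rf (M + 1) (u + 2)
    calc ((M : ℝ) + 1) ^ (u + 2) = (((M + 1) ^ (u + 2) : ℕ) : ℝ) := by push_cast; ring
      _ ≤ _ := by exact_mod_cast h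
  have hMcast : ((M + 1 : ℕ) : ℝ) = (M : ℝ) + 1 := by push_cast; ring
  have hncast : ((n + 1 : ℕ) : ℝ) = (n : ℝ) + 1 := by push_cast; ring
  have h2M : (n : ℝ) + 1 ≤ 2 * ((M : ℝ) + 1) := by exact_mod_cast hM2
  have hMpos : (0 : ℝ) < (M : ℝ) + 1 := by positivity
  have hnpos : (0 : ℝ) < (n : ℝ) := by exact_mod_cast hn1
  have hn1' : (1 : ℝ) ≤ (n : ℝ) := by exact_mod_cast hn1
  have hCub : Cf ≤ 2 ^ (u + 3) * (n : ℝ) ^ (u + 1) := by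
    rw [hCf, hMcast, hncast, div_le_iff₀ (by positivity)]
    have hb3 : ((n : ℝ) + 1) ^ 2 ≤ 4 * ((M : ℝ) + 1) ^ 2 := by nlinarith
    have hb4 : ((n : ℝ) + 1) ^ (u + 1) ≤ (2 * (n : ℝ)) ^ (u + 1) :=
      pow_le_pow_left₀ (by positivity) (by linarith) (u + 1)
    calc ((n : ℝ) + 1) * (rf (M + 1) (u + 2) : ℝ)
        ≤ ((n : ℝ) + 1) * ((n : ℝ) + 1) ^ (u + 2) :=
          mul_le_mul_of_nonneg_left hrfub (by positivity)
      _ = ((n : ℝ) + 1) ^ (u + 1) * ((n : ℝ) + 1) ^ 2 := by ring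
      _ ≤ ((n : ℝ) + 1) ^ (u + 1) * (4 * ((M : ℝ) + 1) ^ 2) :=
          mul_le_mul_of_nonneg_left hb3 (by positivity)
      _ ≤ (2 * (n : ℝ)) ^ (u + 1) * (4 * ((M : ℝ) + 1) ^ 2) :=
          mul_le_mul_of_nonneg_right hb4 (by positivity)
      _ = 2 ^ (u + 3) * (n : ℝ) ^ (u + 1) * ((M : ℝ) + 1) ^ 2 := by
          rw [mul_pow]; ring
  have hClb : (n : ℝ) ^ (u + 1) / 2 ^ u ≤ Cf := by
    rw [hCf, hMcast, hncast, le_div_iff₀ (by positivity), div_mul_eq_mul_div,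
      div_le_iff₀ (by positivity)]
    have hb2 : (n : ℝ) ^ u ≤ (2 * ((M : ℝ) + 1)) ^ u :=
      pow_le_pow_left₀ hnpos.le (by linarith) u
    calc (n : ℝ) ^ (u + 1) * ((M : ℝ) + 1) ^ 2
        = ((n : ℝ) * (n : ℝ) ^ u) * ((M : ℝ) + 1) ^ 2 := by ring
      _ ≤ (((n : ℝ) + 1) * (2 * ((M : ℝ) + 1)) ^ u) * ((M : ℝ) + 1) ^ 2 := by
          refine mul_le_mul_of_nonneg_right ?_ (by positivity)
          exact mul_le_mul (by linarith) hb2 (by positivity) (by positivity)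
      _ = ((n : ℝ) + 1) * ((M : ℝ) + 1) ^ (u + 2) * 2 ^ u := by
          rw [mul_pow]; ring
      _ ≤ ((n : ℝ) + 1) * (rf (M + 1) (u + 2) : ℝ) * 2 ^ u := by
          refine mul_le_mul_of_nonneg_right ?_ (by positivity)
          exact mul_le_mul_of_nonneg_left hrflb (by positivity)
  constructor
  · calc ((2 : ℝ) ^ u * ((u + 2).factorial : ℝ))⁻¹ * (n : ℝ) ^ (u + 2 - 1)
        = ((n : ℝ) ^ (u + 1) / 2 ^ u) * (((u + 2).factorial : ℝ))⁻¹ := by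
          rw [hsub, mul_inv]; ring
      _ ≤ Cf * Sig0 := mul_le_mul hClb hSlb (by positivity) hCf0
      _ = GammaShap n (u + 2) S := hge.symm
  · calc GammaShap n (u + 2) S = Cf * Sig0 := hge
      _ ≤ (2 ^ (u + 3) * (n : ℝ) ^ (u + 1)) * 2 ^ (u + 3) :=
          mul_le_mul hCub hSub0 hSpos (by positivity)
      _ = 2 ^ (2 * u + 6) * (n : ℝ) ^ (u + 2 - 1) := by
          rw [hsub, show 2 * u + 6 = (u + 3) + (u + 3) by omega, pow_add]
          ring
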